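/- arXiv:1109.0818 — 4 statements merged into one kernel-verified Lean document; each statement's English description precedes it below -/
import Mathlib

section
/- For the state Φ = √((1−d)/2)|01⟩ + √((1+d)/2)|10⟩ with d = √(1−c²), c ∈ [0,1], the Wootters concurrence of ω_Φ equals c; hence the total correlation of ω_Φ with respect to the canonical Bell pair (𝒜₀, ℬ₀) equals its concurrence. -/
open Matrix Kronecker ComplexOrder

noncomputable def σp : Fin 3 → Matrix (Fin 2) (Fin 2) ℂ
  | 0 => !![0, 1; 1, 0]
  | 1 => !![0, -Complex.I; Complex.I, 0]
  | 2 => !![1, 0; 0, -1]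

noncomputable def kr (A B : Matrix (Fin 2) (Fin 2) ℂ) : Matrix (Fin 4) (Fin 4) ℂ :=
  Matrix.reindex finProdFinEquiv finProdFinEquiv (A ⊗ₖ B)

noncomputable def lam : ℕ → Matrix (Fin 4) (Fin 4) ℂ
  | 1 => kr 1 (σp 0)
  | 2 => kr 1 (σp 1)
  | 3 => kr 1 (σp 2)
  | 4 => kr (σp 0) 1
  | 5 => kr (σp 1) 1
  | 6 => kr (σp 2) 1
  | 7 => kr (σp 0) (σp 0)
  | 8 => kr (σp 0) (σp 1)
  | 9 => kr (σp 0) (σp 2)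
  | 10 => kr (σp 1) (σp 0)
  | 11 => kr (σp 1) (σp 1)
  | 12 => kr (σp 1) (σp 2)
  | 13 => kr (σp 2) (σp 0)
  | 14 => kr (σp 2) (σp 1)
  | 15 => kr (σp 2) (σp 2)
  | _ => 0

noncomputable def vecState (Ψ : Fin 4 → ℂ) (X : Matrix (Fin 4) (Fin 4) ℂ) : ℂ :=
  star Ψ ⬝ᵥ (X *ᵥ Ψ)

noncomputable def opNorm (Q : Matrix (Fin 3) (Fin 3) ℝ) : ℝ :=
  ‖(Matrix.toEuclideanLin Q).toContinuousLinearMap‖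

noncomputable def corrMat (ω : Matrix (Fin 4) (Fin 4) ℂ → ℂ)
    (A B : Fin 3 → Matrix (Fin 4) (Fin 4) ℂ) : Matrix (Fin 3) (Fin 3) ℝ :=
  Matrix.of fun i j => (ω (A i * B j) - ω (A i) * ω (B j)).re

/-- The primed Bell pair generators `A'₁, A'₂, A'₃`. -/
noncomputable def Ap : Fin 3 → Matrix (Fin 4) (Fin 4) ℂ
  | 0 => -((1 / 2 : ℂ) • (lam 3 - lam 6 - lam 7 + lam 11))
  | 1 => -lam 10
  | 2 => -((1 / 2 : ℂ) • (lam 3 + lam 6 - lam 7 - lam 11))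

/-- The primed Bell pair generators `B'₁, B'₂, B'₃`. -/
noncomputable def Bp : Fin 3 → Matrix (Fin 4) (Fin 4) ℂ
  | 0 => ((Real.sqrt 2 : ℂ))⁻¹ • (lam 1 - lam 9)
  | 1 => -((Real.sqrt 2 : ℂ))⁻¹ • (lam 5 - lam 14)
  | 2 => lam 15

/-- The non-canonical Bell pair generators `A₁, A₂, A₃` of Eq. (17). -/
noncomputable def An : Fin 3 → Matrix (Fin 4) (Fin 4) ℂ
  | 0 => ((Real.sqrt 2 : ℂ))⁻¹ • (lam 4 + lam 11)
  | 1 => ((Real.sqrt 2 : ℂ))⁻¹ • (lam 10 - lam 12)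
  | 2 => -((1 / 2 : ℂ) • (lam 1 + lam 3 - lam 13 + lam 15))

/-- The non-canonical Bell pair generators `B₁, B₂, B₃` of Eq. (17). -/
noncomputable def Bn : Fin 3 → Matrix (Fin 4) (Fin 4) ℂ
  | 0 => ((Real.sqrt 2 : ℂ))⁻¹ • (lam 7 + lam 9)
  | 1 => -((Real.sqrt 2 : ℂ))⁻¹ • (lam 5 + lam 8)
  | 2 => (1 / 2 : ℂ) • (lam 1 - lam 3 - lam 13 - lam 15)

lemma kr_eq (A B : Matrix (Fin 2) (Fin 2) ℂ) : kr A B = !![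
  A 0 0 * B 0 0, A 0 0 * B 0 1, A 0 1 * B 0 0, A 0 1 * B 0 1;
  A 0 0 * B 1 0, A 0 0 * B 1 1, A 0 1 * B 1 0, A 0 1 * B 1 1;
  A 1 0 * B 0 0, A 1 0 * B 0 1, A 1 1 * B 0 0, A 1 1 * B 0 1;
  A 1 0 * B 1 0, A 1 0 * B 1 1, A 1 1 * B 1 0, A 1 1 * B 1 1] := by
  ext i j
  fin_cases i <;> fin_cases j <;> rfl

lemma opNorm_diag (c : ℝ) (hc0 : 0 ≤ c) (hc1 : c ≤ 1) :
    opNorm !![c,0,0;0,c,0;0,0,-(c^2)] = c := by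
  set Q : Matrix (Fin 3) (Fin 3) ℝ := !![c,0,0;0,c,0;0,0,-(c^2)] with hQ
  have happ : ∀ (x : EuclideanSpace ℝ (Fin 3)) (i : Fin 3),
      (Matrix.toEuclideanLin Q).toContinuousLinearMap x i = (Q *ᵥ (x : Fin 3 → ℝ)) i := by
    intro x i
    simp [Matrix.toEuclideanLin_apply]
  apply le_antisymm
  · apply ContinuousLinearMap.opNorm_le_bound _ hc0
    intro x
    have h1 : ‖(Matrix.toEuclideanLin Q).toContinuousLinearMap x‖ ^ 2 ≤ (c * ‖x‖) ^ 2 := by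
      rw [EuclideanSpace.norm_eq, EuclideanSpace.norm_eq, Real.sq_sqrt (by positivity), mul_pow,
        Real.sq_sqrt (by positivity)]
      have e0 := happ x 0; have e1 := happ x 1; have e2 := happ x 2
      rw [Fin.sum_univ_three, Fin.sum_univ_three, e0, e1, e2]
      simp [hQ, Matrix.mulVec, dotProduct, Fin.sum_univ_three, Real.norm_eq_abs, mul_pow, sq_abs]
      nlinarith [sq_nonneg (x 0), sq_nonneg (x 1), sq_nonneg (x 2), sq_nonneg c,
        sq_nonneg (c*c), sq_nonneg (c * x 2), mul_le_one₀ hc1 hc0 hc1]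
    have h2 := Real.sqrt_le_sqrt h1
    rwa [Real.sqrt_sq (norm_nonneg _), Real.sqrt_sq (by positivity)] at h2
  · have he : ‖(Matrix.toEuclideanLin Q).toContinuousLinearMap (EuclideanSpace.single 0 1)‖ = c := by
      rw [EuclideanSpace.norm_eq]
      have : ∀ i, (Matrix.toEuclideanLin Q).toContinuousLinearMap (EuclideanSpace.single 0 1) i
          = (Q *ᵥ (fun j => if j = 0 then 1 else 0)) i := by
        intro i; rw [happ]; congr 1; ext j; simp [EuclideanSpace.single_apply]
      rw [Fin.sum_univ_three, this 0, this 1, this 2]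
      simp [hQ, Matrix.mulVec, dotProduct, Fin.sum_univ_three]
      rw [Real.sqrt_sq hc0]
    calc c = ‖(Matrix.toEuclideanLin Q).toContinuousLinearMap (EuclideanSpace.single 0 1)‖ := he.symm
    _ ≤ opNorm Q * ‖(EuclideanSpace.single (0:Fin 3) (1:ℝ))‖ := ContinuousLinearMap.le_opNorm _ _
    _ = opNorm Q := by simp [EuclideanSpace.norm_single]

set_option maxHeartbeats 2000000 in
theorem stmt_4 (c : ℝ) (hc : c ∈ Set.Icc (0:ℝ) 1) (d : ℝ) (hd : d = Real.sqrt (1 - c ^ 2))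
    (Φ : Fin 4 → ℂ)
    (hΦ : Φ = ![0, ((Real.sqrt ((1 - d) / 2) : ℝ) : ℂ), ((Real.sqrt ((1 + d) / 2) : ℝ) : ℂ), 0]) :
    2 * ‖Φ 0 * Φ 3 - Φ 1 * Φ 2‖ = c ∧
    opNorm (corrMat (vecState Φ) (fun i => kr 1 (σp i)) (fun j => kr (σp j) 1)) =
      2 * ‖Φ 0 * Φ 3 - Φ 1 * Φ 2‖ := by
  obtain ⟨hc0, hc1⟩ := hc
  have hc2 : (0:ℝ) ≤ 1 - c ^ 2 := by nlinarith
  have hd0 : 0 ≤ d := hd ▸ Real.sqrt_nonneg _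
  have hd1 : d ≤ 1 := by rw [hd]; simpa using Real.sqrt_le_sqrt (show 1 - c^2 ≤ 1 by nlinarith)
  have hd2 : d ^ 2 = 1 - c ^ 2 := by rw [hd, Real.sq_sqrt hc2]
  set a : ℝ := Real.sqrt ((1 - d) / 2) with hA
  set b : ℝ := Real.sqrt ((1 + d) / 2) with hB
  have ha0 : 0 ≤ a := Real.sqrt_nonneg _
  have hb0 : 0 ≤ b := Real.sqrt_nonneg _
  have ha2 : a ^ 2 = (1 - d) / 2 := Real.sq_sqrt (by linarith)
  have hb2 : b ^ 2 = (1 + d) / 2 := Real.sq_sqrt (by linarith)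
  have hab : 2 * (a * b) = c := by
    have : a * b = Real.sqrt (((1 - d) / 2) * ((1 + d) / 2)) := by
      rw [Real.sqrt_mul (by linarith)]
    have h4 : ((1 - d) / 2) * ((1 + d) / 2) = (c / 2) ^ 2 := by nlinarith
    rw [this, h4, Real.sqrt_sq (by linarith)]; ring
  have hΦ0 : Φ 0 = 0 := by rw [hΦ]; rfl
  have hΦ3 : Φ 3 = 0 := by rw [hΦ]; rfl
  have hΦ1 : Φ 1 = (a : ℂ) := by rw [hΦ]; rfl
  have hΦ2 : Φ 2 = (b : ℂ) := by rw [hΦ]; rfl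
  have habs : 2 * ‖Φ 0 * Φ 3 - Φ 1 * Φ 2‖ = c := by
    rw [hΦ0, hΦ3, hΦ1, hΦ2]
    rw [zero_mul, zero_sub, norm_neg]
    rw [show ((a:ℂ) * b) = ((a*b : ℝ) : ℂ) by push_cast; ring, Complex.norm_real, Real.norm_eq_abs,
      abs_of_nonneg (by positivity)]
    linarith
  refine ⟨habs, ?_⟩
  rw [habs]
  have hM : corrMat (vecState Φ) (fun i => kr 1 (σp i)) (fun j => kr (σp j) 1)
      = !![c,0,0;0,c,0;0,0,-(c^2)] := by
    have h1 : (1 : Matrix (Fin 2) (Fin 2) ℂ) = !![1,0;0,1] := by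
      ext i j; fin_cases i <;> fin_cases j <;> rfl
    ext i j
    fin_cases i <;> fin_cases j <;>
    · simp only [corrMat, vecState, hΦ, Matrix.of_apply, σp, kr_eq, h1]
      simp [Matrix.mul_apply, Matrix.mulVec, dotProduct, Fin.sum_univ_four,
        Matrix.vecHead, Matrix.vecTail, Complex.ext_iff]
      try ring_nf
      try nlinarith [hab, ha2, hb2, hd2, sq_nonneg a, sq_nonneg b]
  rw [hM, opNorm_diag c hc0 hc1]
end

section
/- With the Bell pair (𝒜, ℬ) generated by A₁ = ½⁻¹ᐟ²(λ₄+λ₁₁), A₂ = ½⁻¹ᐟ²(λ₁₀−λ₁₂), A₃ = −½(λ₁+λ₃−λ₁₃+λ₁₅) and B₁ = ½⁻¹ᐟ²(λ₇+λ₉), B₂ = −½⁻¹ᐟ²(λ₅+λ₈), B₃ = ½(λ₁−λ₃−λ₁₃−λ₁₅), the correlation matrices of the canonical basis vector states e₁ and e₂ of ℂ⁴ are zero, while the correlation matrices of e₃ and e₄ are diag(1,1,−1) and diag(−1,−1,−1) respectively; in particular e₃ and e₄ have total correlation 1. -/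
open Matrix Kronecker ComplexOrder

lemma lamE1 : lam 1 = !![0, 1, 0, 0; 1, 0, 0, 0; 0, 0, 0, 1; 0, 0, 1, 0] := by
  ext i j
  fin_cases i <;> fin_cases j <;>
    simp [lam, kr, σp, Matrix.reindex_apply, Matrix.submatrix_apply, finProdFinEquiv,
      Fin.divNat, Fin.modNat, show ((0:Fin 4):ℕ)=0 from rfl, show ((1:Fin 4):ℕ)=1 from rfl,
      show ((2:Fin 4):ℕ)=2 from rfl, show ((3:Fin 4):ℕ)=3 from rfl, Fin.mk_one, Fin.mk_zero,
      Matrix.vecHead, Matrix.vecTail, Matrix.one_apply, Fin.ext_iff]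

lemma lamE3 : lam 3 = !![1, 0, 0, 0; 0, -1, 0, 0; 0, 0, 1, 0; 0, 0, 0, -1] := by
  ext i j
  fin_cases i <;> fin_cases j <;>
    simp [lam, kr, σp, Matrix.reindex_apply, Matrix.submatrix_apply, finProdFinEquiv,
      Fin.divNat, Fin.modNat, show ((0:Fin 4):ℕ)=0 from rfl, show ((1:Fin 4):ℕ)=1 from rfl,
      show ((2:Fin 4):ℕ)=2 from rfl, show ((3:Fin 4):ℕ)=3 from rfl, Fin.mk_one, Fin.mk_zero,
      Matrix.vecHead, Matrix.vecTail, Matrix.one_apply, Fin.ext_iff]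

lemma lamE4 : lam 4 = !![0, 0, 1, 0; 0, 0, 0, 1; 1, 0, 0, 0; 0, 1, 0, 0] := by
  ext i j
  fin_cases i <;> fin_cases j <;>
    simp [lam, kr, σp, Matrix.reindex_apply, Matrix.submatrix_apply, finProdFinEquiv,
      Fin.divNat, Fin.modNat, show ((0:Fin 4):ℕ)=0 from rfl, show ((1:Fin 4):ℕ)=1 from rfl,
      show ((2:Fin 4):ℕ)=2 from rfl, show ((3:Fin 4):ℕ)=3 from rfl, Fin.mk_one, Fin.mk_zero,
      Matrix.vecHead, Matrix.vecTail, Matrix.one_apply, Fin.ext_iff]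

lemma lamE5 : lam 5 = !![0, 0, -Complex.I, 0; 0, 0, 0, -Complex.I; Complex.I, 0, 0, 0; 0, Complex.I, 0, 0] := by
  ext i j
  fin_cases i <;> fin_cases j <;>
    simp [lam, kr, σp, Matrix.reindex_apply, Matrix.submatrix_apply, finProdFinEquiv,
      Fin.divNat, Fin.modNat, show ((0:Fin 4):ℕ)=0 from rfl, show ((1:Fin 4):ℕ)=1 from rfl,
      show ((2:Fin 4):ℕ)=2 from rfl, show ((3:Fin 4):ℕ)=3 from rfl, Fin.mk_one, Fin.mk_zero,
      Matrix.vecHead, Matrix.vecTail, Matrix.one_apply, Fin.ext_iff]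

lemma lamE7 : lam 7 = !![0, 0, 0, 1; 0, 0, 1, 0; 0, 1, 0, 0; 1, 0, 0, 0] := by
  ext i j
  fin_cases i <;> fin_cases j <;>
    simp [lam, kr, σp, Matrix.reindex_apply, Matrix.submatrix_apply, finProdFinEquiv,
      Fin.divNat, Fin.modNat, show ((0:Fin 4):ℕ)=0 from rfl, show ((1:Fin 4):ℕ)=1 from rfl,
      show ((2:Fin 4):ℕ)=2 from rfl, show ((3:Fin 4):ℕ)=3 from rfl, Fin.mk_one, Fin.mk_zero,
      Matrix.vecHead, Matrix.vecTail, Matrix.one_apply, Fin.ext_iff]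

lemma lamE8 : lam 8 = !![0, 0, 0, -Complex.I; 0, 0, Complex.I, 0; 0, -Complex.I, 0, 0; Complex.I, 0, 0, 0] := by
  ext i j
  fin_cases i <;> fin_cases j <;>
    simp [lam, kr, σp, Matrix.reindex_apply, Matrix.submatrix_apply, finProdFinEquiv,
      Fin.divNat, Fin.modNat, show ((0:Fin 4):ℕ)=0 from rfl, show ((1:Fin 4):ℕ)=1 from rfl,
      show ((2:Fin 4):ℕ)=2 from rfl, show ((3:Fin 4):ℕ)=3 from rfl, Fin.mk_one, Fin.mk_zero,
      Matrix.vecHead, Matrix.vecTail, Matrix.one_apply, Fin.ext_iff]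

lemma lamE9 : lam 9 = !![0, 0, 1, 0; 0, 0, 0, -1; 1, 0, 0, 0; 0, -1, 0, 0] := by
  ext i j
  fin_cases i <;> fin_cases j <;>
    simp [lam, kr, σp, Matrix.reindex_apply, Matrix.submatrix_apply, finProdFinEquiv,
      Fin.divNat, Fin.modNat, show ((0:Fin 4):ℕ)=0 from rfl, show ((1:Fin 4):ℕ)=1 from rfl,
      show ((2:Fin 4):ℕ)=2 from rfl, show ((3:Fin 4):ℕ)=3 from rfl, Fin.mk_one, Fin.mk_zero,
      Matrix.vecHead, Matrix.vecTail, Matrix.one_apply, Fin.ext_iff]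

lemma lamE10 : lam 10 = !![0, 0, 0, -Complex.I; 0, 0, -Complex.I, 0; 0, Complex.I, 0, 0; Complex.I, 0, 0, 0] := by
  ext i j
  fin_cases i <;> fin_cases j <;>
    simp [lam, kr, σp, Matrix.reindex_apply, Matrix.submatrix_apply, finProdFinEquiv,
      Fin.divNat, Fin.modNat, show ((0:Fin 4):ℕ)=0 from rfl, show ((1:Fin 4):ℕ)=1 from rfl,
      show ((2:Fin 4):ℕ)=2 from rfl, show ((3:Fin 4):ℕ)=3 from rfl, Fin.mk_one, Fin.mk_zero,
      Matrix.vecHead, Matrix.vecTail, Matrix.one_apply, Fin.ext_iff]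

lemma lamE11 : lam 11 = !![0, 0, 0, -1; 0, 0, 1, 0; 0, 1, 0, 0; -1, 0, 0, 0] := by
  ext i j
  fin_cases i <;> fin_cases j <;>
    simp [lam, kr, σp, Matrix.reindex_apply, Matrix.submatrix_apply, finProdFinEquiv,
      Fin.divNat, Fin.modNat, show ((0:Fin 4):ℕ)=0 from rfl, show ((1:Fin 4):ℕ)=1 from rfl,
      show ((2:Fin 4):ℕ)=2 from rfl, show ((3:Fin 4):ℕ)=3 from rfl, Fin.mk_one, Fin.mk_zero,
      Matrix.vecHead, Matrix.vecTail, Matrix.one_apply, Fin.ext_iff]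

lemma lamE12 : lam 12 = !![0, 0, -Complex.I, 0; 0, 0, 0, Complex.I; Complex.I, 0, 0, 0; 0, -Complex.I, 0, 0] := by
  ext i j
  fin_cases i <;> fin_cases j <;>
    simp [lam, kr, σp, Matrix.reindex_apply, Matrix.submatrix_apply, finProdFinEquiv,
      Fin.divNat, Fin.modNat, show ((0:Fin 4):ℕ)=0 from rfl, show ((1:Fin 4):ℕ)=1 from rfl,
      show ((2:Fin 4):ℕ)=2 from rfl, show ((3:Fin 4):ℕ)=3 from rfl, Fin.mk_one, Fin.mk_zero,
      Matrix.vecHead, Matrix.vecTail, Matrix.one_apply, Fin.ext_iff]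

lemma lamE13 : lam 13 = !![0, 1, 0, 0; 1, 0, 0, 0; 0, 0, 0, -1; 0, 0, -1, 0] := by
  ext i j
  fin_cases i <;> fin_cases j <;>
    simp [lam, kr, σp, Matrix.reindex_apply, Matrix.submatrix_apply, finProdFinEquiv,
      Fin.divNat, Fin.modNat, show ((0:Fin 4):ℕ)=0 from rfl, show ((1:Fin 4):ℕ)=1 from rfl,
      show ((2:Fin 4):ℕ)=2 from rfl, show ((3:Fin 4):ℕ)=3 from rfl, Fin.mk_one, Fin.mk_zero,
      Matrix.vecHead, Matrix.vecTail, Matrix.one_apply, Fin.ext_iff]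

lemma lamE15 : lam 15 = !![1, 0, 0, 0; 0, -1, 0, 0; 0, 0, -1, 0; 0, 0, 0, 1] := by
  ext i j
  fin_cases i <;> fin_cases j <;>
    simp [lam, kr, σp, Matrix.reindex_apply, Matrix.submatrix_apply, finProdFinEquiv,
      Fin.divNat, Fin.modNat, show ((0:Fin 4):ℕ)=0 from rfl, show ((1:Fin 4):ℕ)=1 from rfl,
      show ((2:Fin 4):ℕ)=2 from rfl, show ((3:Fin 4):ℕ)=3 from rfl, Fin.mk_one, Fin.mk_zero,
      Matrix.vecHead, Matrix.vecTail, Matrix.one_apply, Fin.ext_iff]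


lemma rr (c : ℂ) : ((Real.sqrt 2 : ℂ))⁻¹ * (((Real.sqrt 2 : ℂ))⁻¹ * c) = c / 2 := by
  rw [← mul_assoc, ← mul_inv, ← Complex.ofReal_mul, Real.mul_self_sqrt (by norm_num)]
  push_cast
  rw [div_eq_mul_inv, mul_comm]

lemma AnE0 : An 0 = ((Real.sqrt 2 : ℂ))⁻¹ • !![0,0,1,-1; 0,0,1,1; 1,1,0,0; -1,1,0,0] := by
  ext i j
  fin_cases i <;> fin_cases j <;> simp [An, lamE4, lamE11] <;> norm_num [Matrix.vecHead, Matrix.vecTail]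

lemma AnE1 : An 1 = ((Real.sqrt 2 : ℂ))⁻¹ • !![0,0,Complex.I,-Complex.I; 0,0,-Complex.I,-Complex.I; -Complex.I,Complex.I,0,0; Complex.I,Complex.I,0,0] := by
  ext i j
  fin_cases i <;> fin_cases j <;> simp [An, lamE10, lamE12] <;> norm_num [Matrix.vecHead, Matrix.vecTail]

lemma AnE2 : An 2 = !![-1,0,0,0; 0,1,0,0; 0,0,0,-1; 0,0,-1,0] := by
  ext i j
  fin_cases i <;> fin_cases j <;> simp [An, lamE1, lamE3, lamE13, lamE15] <;> norm_num [Matrix.vecHead, Matrix.vecTail]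

lemma BnE0 : Bn 0 = ((Real.sqrt 2 : ℂ))⁻¹ • !![0,0,1,1; 0,0,1,-1; 1,1,0,0; 1,-1,0,0] := by
  ext i j
  fin_cases i <;> fin_cases j <;> simp [Bn, lamE7, lamE9] <;> norm_num [Matrix.vecHead, Matrix.vecTail]

lemma BnE1 : Bn 1 = ((Real.sqrt 2 : ℂ))⁻¹ • !![0,0,Complex.I,Complex.I; 0,0,-Complex.I,Complex.I; -Complex.I,Complex.I,0,0; -Complex.I,-Complex.I,0,0] := by
  ext i j
  fin_cases i <;> fin_cases j <;> simp [Bn, lamE5, lamE8] <;> norm_num [Matrix.vecHead, Matrix.vecTail]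

lemma BnE2 : Bn 2 = !![-1,0,0,0; 0,1,0,0; 0,0,0,1; 0,0,1,0] := by
  ext i j
  fin_cases i <;> fin_cases j <;> simp [Bn, lamE1, lamE3, lamE13, lamE15] <;> norm_num [Matrix.vecHead, Matrix.vecTail]

lemma vs0 (X : Matrix (Fin 4) (Fin 4) ℂ) : vecState ![1,0,0,0] X = X 0 0 := by
  simp [vecState, dotProduct, Matrix.mulVec, Fin.sum_univ_four]

lemma vs1 (X : Matrix (Fin 4) (Fin 4) ℂ) : vecState ![0,1,0,0] X = X 1 1 := by
  simp [vecState, dotProduct, Matrix.mulVec, Fin.sum_univ_four]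

lemma vs2 (X : Matrix (Fin 4) (Fin 4) ℂ) : vecState ![0,0,1,0] X = X 2 2 := by
  simp [vecState, dotProduct, Matrix.mulVec, Fin.sum_univ_four]

lemma vs3 (X : Matrix (Fin 4) (Fin 4) ℂ) : vecState ![0,0,0,1] X = X 3 3 := by
  simp [vecState, dotProduct, Matrix.mulVec, Fin.sum_univ_four]

lemma corr0 : corrMat (vecState ![1,0,0,0]) An Bn = 0 := by
  ext i j
  fin_cases i <;> fin_cases j <;>
    simp [corrMat, vs0, AnE0, AnE1, AnE2, BnE0, BnE1, BnE2, Matrix.smul_mul, Matrix.mul_smul,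
      Matrix.mul_apply, Fin.sum_univ_four, rr, Complex.ext_iff, Matrix.vecHead, Matrix.vecTail] <;> ring_nf <;> norm_num [Real.sq_sqrt]

lemma corr1 : corrMat (vecState ![0,1,0,0]) An Bn = 0 := by
  ext i j
  fin_cases i <;> fin_cases j <;>
    simp [corrMat, vs1, AnE0, AnE1, AnE2, BnE0, BnE1, BnE2, Matrix.smul_mul, Matrix.mul_smul,
      Matrix.mul_apply, Fin.sum_univ_four, rr, Complex.ext_iff, Matrix.vecHead, Matrix.vecTail] <;> ring_nf <;> norm_num [Real.sq_sqrt]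

lemma corr2 : corrMat (vecState ![0,0,1,0]) An Bn = Matrix.diagonal ![1,1,-1] := by
  ext i j
  fin_cases i <;> fin_cases j <;>
    simp [corrMat, vs2, AnE0, AnE1, AnE2, BnE0, BnE1, BnE2, Matrix.smul_mul, Matrix.mul_smul,
      Matrix.mul_apply, Fin.sum_univ_four, rr, Complex.ext_iff, Matrix.diagonal, Matrix.vecHead, Matrix.vecTail] <;> ring_nf <;> norm_num [Real.sq_sqrt]

lemma corr3 : corrMat (vecState ![0,0,0,1]) An Bn = Matrix.diagonal ![-1,-1,-1] := by
  ext i j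
  fin_cases i <;> fin_cases j <;>
    simp [corrMat, vs3, AnE0, AnE1, AnE2, BnE0, BnE1, BnE2, Matrix.smul_mul, Matrix.mul_smul,
      Matrix.mul_apply, Fin.sum_univ_four, rr, Complex.ext_iff, Matrix.diagonal, Matrix.vecHead, Matrix.vecTail] <;> ring_nf <;> norm_num [Real.sq_sqrt]

open scoped Matrix.Norms.L2Operator in
lemma opNorm_eq_norm (Q : Matrix (Fin 3) (Fin 3) ℝ) : opNorm Q = ‖Q‖ := rfl

open scoped Matrix.Norms.L2Operator in
lemma opNorm_of_orthogonal (Q : Matrix (Fin 3) (Fin 3) ℝ) (h : Qᴴ * Q = 1) : opNorm Q = 1 := by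
  rw [opNorm_eq_norm]
  have hone : ‖(1 : Matrix (Fin 3) (Fin 3) ℝ)‖ = 1 := by
    have h1 := Matrix.l2_opNorm_conjTranspose_mul_self (1 : Matrix (Fin 3) (Fin 3) ℝ)
    rw [Matrix.conjTranspose_one, one_mul] at h1
    have hnz : ‖(1 : Matrix (Fin 3) (Fin 3) ℝ)‖ ≠ 0 := by
      simp [norm_eq_zero]
    exact (mul_left_cancel₀ hnz (by rw [mul_one, ← h1])).symm
  have h2 := Matrix.l2_opNorm_conjTranspose_mul_self Q
  rw [h, hone] at h2
  nlinarith [norm_nonneg Q]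

lemma orth2 : (Matrix.diagonal ![1,1,-1] : Matrix (Fin 3) (Fin 3) ℝ)ᴴ * Matrix.diagonal ![1,1,-1] = 1 := by
  ext i j
  fin_cases i <;> fin_cases j <;>
    simp [Matrix.mul_apply, Fin.sum_univ_three, Matrix.diagonal, Matrix.conjTranspose_apply,
      Matrix.one_apply]

lemma orth3 : (Matrix.diagonal ![-1,-1,-1] : Matrix (Fin 3) (Fin 3) ℝ)ᴴ * Matrix.diagonal ![-1,-1,-1] = 1 := by
  ext i j
  fin_cases i <;> fin_cases j <;>
    simp [Matrix.mul_apply, Fin.sum_univ_three, Matrix.diagonal, Matrix.conjTranspose_apply,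
      Matrix.one_apply]

theorem stmt_7 :
    corrMat (vecState ![1, 0, 0, 0]) An Bn = 0 ∧
    corrMat (vecState ![0, 1, 0, 0]) An Bn = 0 ∧
    corrMat (vecState ![0, 0, 1, 0]) An Bn = Matrix.diagonal ![1, 1, -1] ∧
    corrMat (vecState ![0, 0, 0, 1]) An Bn = Matrix.diagonal ![-1, -1, -1] ∧
    opNorm (corrMat (vecState ![0, 0, 1, 0]) An Bn) = 1 ∧
    opNorm (corrMat (vecState ![0, 0, 0, 1]) An Bn) = 1 := by
  refine ⟨corr0, corr1, corr2, corr3, ?_, ?_⟩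
  · rw [corr2]; exact opNorm_of_orthogonal _ orth2
  · rw [corr3]; exact opNorm_of_orthogonal _ orth3
end

section
/- The state Ψ = ½(e₁ + e₂ + i e₃ − i e₄) (i.e. Ψ_{a,φ,ϑ} with a = 1/√2, φ = 0, ϑ = π/2) has total correlation 1 both with respect to the canonical Bell pair (𝒜₀, ℬ₀) and with respect to the Bell pair (𝒜', ℬ') defined via λ-generators; i.e., it is maximally entangled for both partitions. -/
open Matrix Kronecker ComplexOrder

namespace Stmt10Aux

lemma kr_eq (A B : Matrix (Fin 2) (Fin 2) ℂ) :
    kr A B = !![A 0 0 * B 0 0, A 0 0 * B 0 1, A 0 1 * B 0 0, A 0 1 * B 0 1;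
                A 0 0 * B 1 0, A 0 0 * B 1 1, A 0 1 * B 1 0, A 0 1 * B 1 1;
                A 1 0 * B 0 0, A 1 0 * B 0 1, A 1 1 * B 0 0, A 1 1 * B 0 1;
                A 1 0 * B 1 0, A 1 0 * B 1 1, A 1 1 * B 1 0, A 1 1 * B 1 1] := by
  ext i j
  fin_cases i <;> fin_cases j <;>
    · simp only [kr, Matrix.reindex_apply, Matrix.submatrix_apply, Matrix.kroneckerMap_apply]
      norm_num
      rfl

lemma lam1_eq : lam 1 = !![0,1,0,0; 1,0,0,0; 0,0,0,1; 0,0,1,0] := by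
  show kr 1 (σp 0) = _; rw [kr_eq]; norm_num [σp, Matrix.one_apply]
lemma lam2_eq : lam 2 = !![0,-Complex.I,0,0; Complex.I,0,0,0; 0,0,0,-Complex.I; 0,0,Complex.I,0] := by
  show kr 1 (σp 1) = _; rw [kr_eq]; norm_num [σp, Matrix.one_apply]
lemma lam3_eq : lam 3 = !![1,0,0,0; 0,-1,0,0; 0,0,1,0; 0,0,0,-1] := by
  show kr 1 (σp 2) = _; rw [kr_eq]; norm_num [σp, Matrix.one_apply]
lemma lam4_eq : lam 4 = !![0,0,1,0; 0,0,0,1; 1,0,0,0; 0,1,0,0] := by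
  show kr (σp 0) 1 = _; rw [kr_eq]; norm_num [σp, Matrix.one_apply]
lemma lam5_eq : lam 5 = !![0,0,-Complex.I,0; 0,0,0,-Complex.I; Complex.I,0,0,0; 0,Complex.I,0,0] := by
  show kr (σp 1) 1 = _; rw [kr_eq]; norm_num [σp, Matrix.one_apply]
lemma lam6_eq : lam 6 = !![1,0,0,0; 0,1,0,0; 0,0,-1,0; 0,0,0,-1] := by
  show kr (σp 2) 1 = _; rw [kr_eq]; norm_num [σp, Matrix.one_apply]
lemma lam7_eq : lam 7 = !![0,0,0,1; 0,0,1,0; 0,1,0,0; 1,0,0,0] := by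
  show kr (σp 0) (σp 0) = _; rw [kr_eq]; norm_num [σp]
lemma lam9_eq : lam 9 = !![0,0,1,0; 0,0,0,-1; 1,0,0,0; 0,-1,0,0] := by
  show kr (σp 0) (σp 2) = _; rw [kr_eq]; norm_num [σp]
lemma lam10_eq : lam 10 = !![0,0,0,-Complex.I; 0,0,-Complex.I,0; 0,Complex.I,0,0; Complex.I,0,0,0] := by
  show kr (σp 1) (σp 0) = _; rw [kr_eq]; norm_num [σp]
lemma lam11_eq : lam 11 = !![0,0,0,-1; 0,0,1,0; 0,1,0,0; -1,0,0,0] := by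
  show kr (σp 1) (σp 1) = _; rw [kr_eq]; norm_num [σp]
lemma lam14_eq : lam 14 = !![0,-Complex.I,0,0; Complex.I,0,0,0; 0,0,0,Complex.I; 0,0,-Complex.I,0] := by
  show kr (σp 2) (σp 1) = _; rw [kr_eq]; norm_num [σp]
lemma lam15_eq : lam 15 = !![1,0,0,0; 0,-1,0,0; 0,0,-1,0; 0,0,0,1] := by
  show kr (σp 2) (σp 2) = _; rw [kr_eq]; norm_num [σp]

lemma Ap0_eq : Ap 0 = !![0,0,0,1; 0,1,0,0; 0,0,-1,0; 1,0,0,0] := by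
  show -((1 / 2 : ℂ) • (lam 3 - lam 6 - lam 7 + lam 11)) = _
  rw [lam3_eq, lam6_eq, lam7_eq, lam11_eq]
  ext i j; fin_cases i <;> fin_cases j <;> norm_num

lemma Ap1_eq : Ap 1 = !![0,0,0,Complex.I; 0,0,Complex.I,0; 0,-Complex.I,0,0; -Complex.I,0,0,0] := by
  show -lam 10 = _
  rw [lam10_eq]; ext i j; fin_cases i <;> fin_cases j <;> norm_num

lemma Ap2_eq : Ap 2 = !![-1,0,0,0; 0,0,1,0; 0,1,0,0; 0,0,0,1] := by
  show -((1 / 2 : ℂ) • (lam 3 + lam 6 - lam 7 - lam 11)) = _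
  rw [lam3_eq, lam6_eq, lam7_eq, lam11_eq]
  ext i j; fin_cases i <;> fin_cases j <;> norm_num

lemma Bp0_eq : Bp 0 = ((Real.sqrt 2 : ℂ))⁻¹ • !![0,1,-1,0; 1,0,0,1; -1,0,0,1; 0,1,1,0] := by
  show ((Real.sqrt 2 : ℂ))⁻¹ • (lam 1 - lam 9) = _
  rw [lam1_eq, lam9_eq]; congr 1
  ext i j; fin_cases i <;> fin_cases j <;> norm_num

lemma Bp1_eq : Bp 1 = ((Real.sqrt 2 : ℂ))⁻¹ •
    !![0,-Complex.I,Complex.I,0; Complex.I,0,0,Complex.I; -Complex.I,0,0,Complex.I; 0,-Complex.I,-Complex.I,0] := by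
  show -((Real.sqrt 2 : ℂ))⁻¹ • (lam 5 - lam 14) = _
  rw [lam5_eq, lam14_eq]
  rw [neg_smul, ← smul_neg]; congr 1
  ext i j; fin_cases i <;> fin_cases j <;> norm_num

lemma Bp2_eq : Bp 2 = !![1,0,0,0; 0,-1,0,0; 0,0,-1,0; 0,0,0,1] := lam15_eq

lemma opNorm_eq_one (Q : Matrix (Fin 3) (Fin 3) ℝ)
    (h : ∀ x : EuclideanSpace ℝ (Fin 3), ‖Matrix.toEuclideanLin Q x‖ = ‖x‖) :
    opNorm Q = 1 := by
  have key : ∀ x, ‖(Matrix.toEuclideanLin Q).toContinuousLinearMap x‖ = ‖x‖ := by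
    intro x; simpa using h x
  unfold opNorm
  refine le_antisymm (ContinuousLinearMap.opNorm_le_bound _ zero_le_one fun x => by
    rw [one_mul, key]) ?_
  have h2 := ContinuousLinearMap.unit_le_opNorm
    (Matrix.toEuclideanLin Q).toContinuousLinearMap
    (EuclideanSpace.single (0 : Fin 3) (1 : ℝ)) (by simp)
  rwa [key, EuclideanSpace.norm_single, norm_one] at h2

end Stmt10Aux

set_option maxHeartbeats 4000000 in
theorem stmt_10 (Ψ : Fin 4 → ℂ)
    (hΨ : Ψ = ![1 / 2, 1 / 2, Complex.I / 2, -Complex.I / 2]) :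
    opNorm (corrMat (vecState Ψ) (fun i => kr 1 (σp i)) (fun j => kr (σp j) 1)) = 1 ∧
    opNorm (corrMat (vecState Ψ) Ap Bp) = 1 := by
  have hr : ((Real.sqrt 2)⁻¹ : ℝ) ^ 2 = 1/2 := by
    rw [inv_pow, Real.sq_sqrt (by norm_num : (0:ℝ) ≤ 2)]
    norm_num
  have hhalf : ((Real.sqrt 2)⁻¹ : ℝ) = Real.sqrt 2 / 2 := by
    rw [eq_div_iff (by norm_num : (2:ℝ) ≠ 0), inv_mul_eq_div, div_eq_iff
      (by positivity : (Real.sqrt 2) ≠ 0)]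
    nlinarith [Real.sq_sqrt (show (0:ℝ) ≤ 2 by norm_num)]
  have hQ0 : corrMat (vecState Ψ) (fun i => kr 1 (σp i)) (fun j => kr (σp j) 1) =
      !![0,0,1; -1,0,0; 0,1,0] := by
    ext i j
    fin_cases i <;> fin_cases j <;>
      · simp [corrMat, vecState, hΨ, Stmt10Aux.kr_eq, σp, Matrix.one_apply, Matrix.mul_apply,
          Matrix.mulVec, dotProduct, Fin.sum_univ_four]
        norm_num [Complex.div_re, Complex.div_im, Complex.normSq_apply, Matrix.vecHead,
          Matrix.vecTail, Complex.ext_iff]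
  have hQp : corrMat (vecState Ψ) Ap Bp =
      !![(Real.sqrt 2)⁻¹, (Real.sqrt 2)⁻¹, 0; 0,0,1; -(Real.sqrt 2)⁻¹, (Real.sqrt 2)⁻¹, 0] := by
    ext i j
    fin_cases i <;> fin_cases j <;>
      · simp [corrMat, vecState, hΨ, Stmt10Aux.Ap0_eq, Stmt10Aux.Ap1_eq, Stmt10Aux.Ap2_eq,
          Stmt10Aux.Bp0_eq, Stmt10Aux.Bp1_eq, Stmt10Aux.Bp2_eq, Matrix.mul_apply,
          Matrix.mulVec, dotProduct, Fin.sum_univ_four, Matrix.smul_apply, smul_eq_mul]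
        norm_num [Complex.div_re, Complex.div_im, Complex.normSq_apply, Matrix.vecHead,
          Matrix.vecTail, Complex.ext_iff, Complex.inv_re, Complex.inv_im, Complex.mul_re,
          Complex.mul_im]
        all_goals rw [hhalf]; ring
  constructor
  · rw [hQ0]
    apply Stmt10Aux.opNorm_eq_one
    intro x
    rw [EuclideanSpace.norm_eq, EuclideanSpace.norm_eq]
    congr 1
    simp only [Matrix.toEuclideanLin_apply, 
      Matrix.mulVec, dotProduct, Fin.sum_univ_three, Real.norm_eq_abs, sq_abs]
    norm_num [Matrix.cons_val_zero, Matrix.cons_val_one, Matrix.cons_val_two, Matrix.head_cons, Matrix.vecHead,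
      Matrix.vecTail]
    ring
  · rw [hQp]
    apply Stmt10Aux.opNorm_eq_one
    intro x
    rw [EuclideanSpace.norm_eq, EuclideanSpace.norm_eq]
    congr 1
    simp only [Matrix.toEuclideanLin_apply, 
      Matrix.mulVec, dotProduct, Fin.sum_univ_three, Real.norm_eq_abs, sq_abs]
    norm_num [Matrix.cons_val_zero, Matrix.cons_val_one, Matrix.cons_val_two, Matrix.head_cons, Matrix.vecHead,
      Matrix.vecTail]
    nlinarith [hr, sq_nonneg (x 0), sq_nonneg (x 1)]
end

section
/- Let (𝒜, ℬ) be a Bell pair with Pauli-type generators and ω_Ψ a pure two-qubit vector state. If the restriction vectors r = (ω(A₁),ω(A₂),ω(A₃)) and s = (ω(B₁),ω(B₂),ω(B₃)) satisfy ‖r‖ = ‖s‖ = 1, then ω_Ψ is (𝒜,ℬ)-separable, i.e. ω_Ψ(AB) = ω_Ψ(A)ω_Ψ(B) for all A ∈ 𝒜, B ∈ ℬ. -/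
open Matrix Kronecker ComplexOrder

section Aux

variable {R : Type*} [Ring R] [Algebra ℂ R]

/-- Square of a real combination of three pairwise anticommuting involutions. -/
theorem aux_sq (a b c : R) (ha : a*a = 1) (hb : b*b = 1) (hc : c*c = 1)
    (hab : b*a = -(a*b)) (hac : c*a = -(a*c)) (hbc : c*b = -(b*c))
    (x y z : ℂ) :
    (x•a + y•b + z•c)*(x•a + y•b + z•c) = (x^2+y^2+z^2) • (1:R) := by
  have ha' : ∀ t : R, a*(a*t) = t := fun t => by rw [← mul_assoc, ha, one_mul]
  have hb' : ∀ t : R, b*(b*t) = t := fun t => by rw [← mul_assoc, hb, one_mul]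
  have hc' : ∀ t : R, c*(c*t) = t := fun t => by rw [← mul_assoc, hc, one_mul]
  have hab' : ∀ t : R, b*(a*t) = -(a*(b*t)) := fun t => by
    rw [← mul_assoc, hab, neg_mul, mul_assoc]
  have hac' : ∀ t : R, c*(a*t) = -(a*(c*t)) := fun t => by
    rw [← mul_assoc, hac, neg_mul, mul_assoc]
  have hbc' : ∀ t : R, c*(b*t) = -(b*(c*t)) := fun t => by
    rw [← mul_assoc, hbc, neg_mul, mul_assoc]
  simp only [mul_add, add_mul, smul_mul_assoc, mul_smul_comm, smul_smul, mul_assoc,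
    mul_one, one_mul, smul_add, neg_mul, mul_neg,
    ha, hb, hc, hab, hac, hbc, ha', hb', hc', hab', hac', hbc', smul_neg, neg_neg]
  match_scalars <;> ring

/-- The key projection computation `(1+m)·a·(1+m) = 2x(1+m) + (1-‖r‖²)a`. -/
theorem aux_pap (a b c : R) (ha : a*a = 1) (hb : b*b = 1) (hc : c*c = 1)
    (hab : b*a = -(a*b)) (hac : c*a = -(a*c)) (hbc : c*b = -(b*c))
    (x y z : ℂ) :
    ((1:R) + (x•a + y•b + z•c)) * a * (1 + (x•a + y•b + z•c))
      = (2*x) • ((1:R) + (x•a + y•b + z•c)) + (1-(x^2+y^2+z^2)) • a := by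
  have ha' : ∀ t : R, a*(a*t) = t := fun t => by rw [← mul_assoc, ha, one_mul]
  have hb' : ∀ t : R, b*(b*t) = t := fun t => by rw [← mul_assoc, hb, one_mul]
  have hc' : ∀ t : R, c*(c*t) = t := fun t => by rw [← mul_assoc, hc, one_mul]
  have hab' : ∀ t : R, b*(a*t) = -(a*(b*t)) := fun t => by
    rw [← mul_assoc, hab, neg_mul, mul_assoc]
  have hac' : ∀ t : R, c*(a*t) = -(a*(c*t)) := fun t => by
    rw [← mul_assoc, hac, neg_mul, mul_assoc]
  have hbc' : ∀ t : R, c*(b*t) = -(b*(c*t)) := fun t => by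
    rw [← mul_assoc, hbc, neg_mul, mul_assoc]
  simp only [mul_add, add_mul, smul_mul_assoc, mul_smul_comm, smul_smul, mul_assoc,
    mul_one, one_mul, smul_add, neg_mul, mul_neg,
    ha, hb, hc, hab, hac, hbc, ha', hb', hc', hab', hac', hbc', smul_neg, neg_neg]
  match_scalars <;> ring

end Aux

theorem vecState_add (Ψ : Fin 4 → ℂ) (X Y : Matrix (Fin 4) (Fin 4) ℂ) :
    vecState Ψ (X + Y) = vecState Ψ X + vecState Ψ Y := by
  simp [vecState, Matrix.add_mulVec, dotProduct_add]

theorem vecState_smul (Ψ : Fin 4 → ℂ) (t : ℂ) (X : Matrix (Fin 4) (Fin 4) ℂ) :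
    vecState Ψ (t • X) = t * vecState Ψ X := by
  simp [vecState, Matrix.smul_mulVec]

theorem vecState_zero (Ψ : Fin 4 → ℂ) : vecState Ψ (0 : Matrix (Fin 4) (Fin 4) ℂ) = 0 := by
  simp [vecState]

abbrev M4 : Type := Matrix (Fin 4) (Fin 4) ℂ

theorem vecState_real (Ψ : Fin 4 → ℂ) (X : Matrix (Fin 4) (Fin 4) ℂ) (hX : Xᴴ = X) :
    vecState Ψ X = ((vecState Ψ X).re : ℂ) := by
  have h : (starRingEnd ℂ) (vecState Ψ X) = vecState Ψ X := by
    show star (vecState Ψ X) = vecState Ψ X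
    unfold vecState
    calc star (star Ψ ⬝ᵥ (X *ᵥ Ψ))
        = star (X *ᵥ Ψ) ⬝ᵥ Ψ := by
          rw [Matrix.star_dotProduct, star_star]
      _ = (star Ψ ᵥ* Xᴴ) ⬝ᵥ Ψ := by rw [Matrix.star_mulVec]
      _ = star Ψ ⬝ᵥ (X *ᵥ Ψ) := by rw [hX, ← Matrix.dotProduct_mulVec]
  exact (Complex.conj_eq_iff_re.mp h).symm

theorem stmt_18 (A B : Fin 3 → Matrix (Fin 4) (Fin 4) ℂ)
    (hAherm : ∀ i, (A i)ᴴ = A i) (hBherm : ∀ i, (B i)ᴴ = B i)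
    (hA2 : ∀ i, A i * A i = 1) (hB2 : ∀ i, B i * B i = 1)
    (hcomm : ∀ i j, A i * B j = B j * A i)
    (hAanti : ∀ i j, i ≠ j → A i * A j + A j * A i = 0)
    (hBanti : ∀ i j, i ≠ j → B i * B j + B j * B i = 0)
    (hgen : Algebra.adjoin ℂ {X | (∃ i, X = A i) ∨ ∃ i, X = B i} = ⊤)
    (Ψ : Fin 4 → ℂ) (hΨ : ∑ i, ‖Ψ i‖ ^ 2 = 1)
    (hr : ∑ i, (vecState Ψ (A i)).re ^ 2 = 1)
    (hs : ∑ j, (vecState Ψ (B j)).re ^ 2 = 1) :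
    ∀ X ∈ Algebra.adjoin ℂ {Y | ∃ i, Y = A i}, ∀ Y ∈ Algebra.adjoin ℂ {Y | ∃ j, Y = B j},
      vecState Ψ (X * Y) = vecState Ψ X * vecState Ψ Y := by
  -- normalization of Ψ
  have hΨ1 : star Ψ ⬝ᵥ Ψ = 1 := by
    have : star Ψ ⬝ᵥ Ψ = ((∑ i, ‖Ψ i‖ ^ 2 : ℝ) : ℂ) := by
      rw [Complex.ofReal_sum]
      unfold dotProduct
      refine Finset.sum_congr rfl fun i _ => ?_
      rw [Pi.star_apply, RCLike.star_def, mul_comm, Complex.mul_conj, Complex.sq_norm]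
    rw [this, hΨ, Complex.ofReal_one]
  have hvone : vecState Ψ (1 : M4) = 1 := by
    unfold vecState; rw [Matrix.one_mulVec, hΨ1]
  -- real expectation values
  set r : Fin 3 → ℝ := fun i => (vecState Ψ (A i)).re with hrdef
  have hAr : ∀ i, vecState Ψ (A i) = ((r i : ℝ) : ℂ) := fun i =>
    vecState_real Ψ (A i) (hAherm i)
  have hsum : ((r 0 : ℂ))^2 + ((r 1 : ℂ))^2 + ((r 2 : ℂ))^2 = 1 := by
    have : r 0 ^ 2 + r 1 ^ 2 + r 2 ^ 2 = 1 := by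
      rw [← hr, Fin.sum_univ_three]
    norm_cast
  -- anticommutation in negation form
  have c10 : A 1 * A 0 = -(A 0 * A 1) := eq_neg_of_add_eq_zero_left (hAanti 1 0 (by decide))
  have c20 : A 2 * A 0 = -(A 0 * A 2) := eq_neg_of_add_eq_zero_left (hAanti 2 0 (by decide))
  have c21 : A 2 * A 1 = -(A 1 * A 2) := eq_neg_of_add_eq_zero_left (hAanti 2 1 (by decide))
  have c01 : A 0 * A 1 = -(A 1 * A 0) := eq_neg_of_add_eq_zero_left (hAanti 0 1 (by decide))
  have c02 : A 0 * A 2 = -(A 2 * A 0) := eq_neg_of_add_eq_zero_left (hAanti 0 2 (by decide))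
  have c12 : A 1 * A 2 = -(A 2 * A 1) := eq_neg_of_add_eq_zero_left (hAanti 1 2 (by decide))
  -- the Bloch projection P
  set m : M4 := ((r 0 : ℂ)) • A 0 + ((r 1 : ℂ)) • A 1 + ((r 2 : ℂ)) • A 2 with hmdef
  have hm2 : m * m = 1 := by
    rw [hmdef, aux_sq (A 0) (A 1) (A 2) (hA2 0) (hA2 1) (hA2 2) c10 c20 c21, hsum, one_smul]
  set P : M4 := ((2⁻¹ : ℝ) : ℂ) • (1 + m) with hPdef
  clear_value m P
  have hpap0 : (1 + m) * A 0 * (1 + m) = (2 * (r 0 : ℂ)) • (1 + m) := by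
    have := aux_pap (A 0) (A 1) (A 2) (hA2 0) (hA2 1) (hA2 2) c10 c20 c21
      (r 0 : ℂ) (r 1 : ℂ) (r 2 : ℂ)
    rw [← hmdef] at this
    rw [this, hsum]; simp
  have hpap1 : (1 + m) * A 1 * (1 + m) = (2 * (r 1 : ℂ)) • (1 + m) := by
    have hm' : m = ((r 1 : ℂ)) • A 1 + ((r 0 : ℂ)) • A 0 + ((r 2 : ℂ)) • A 2 := by
      rw [hmdef]; abel
    have := aux_pap (A 1) (A 0) (A 2) (hA2 1) (hA2 0) (hA2 2) c01 c21 c20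
      (r 1 : ℂ) (r 0 : ℂ) (r 2 : ℂ)
    rw [← hm'] at this
    rw [show ((1:M4) + m) * A 1 * (1 + m) = (2 * (r 1 : ℂ)) • ((1:M4) + m)
        + (1 - ((r 1:ℂ)^2 + (r 0:ℂ)^2 + (r 2:ℂ)^2)) • A 1 from this,
      show ((r 1:ℂ)^2 + (r 0:ℂ)^2 + (r 2:ℂ)^2) = 1 by rw [← hsum]; ring]
    simp
  have hpap2 : (1 + m) * A 2 * (1 + m) = (2 * (r 2 : ℂ)) • (1 + m) := by
    have hm' : m = ((r 2 : ℂ)) • A 2 + ((r 0 : ℂ)) • A 0 + ((r 1 : ℂ)) • A 1 := by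
      rw [hmdef]; abel
    have := aux_pap (A 2) (A 0) (A 1) (hA2 2) (hA2 0) (hA2 1) c02 c12 c10
      (r 2 : ℂ) (r 0 : ℂ) (r 1 : ℂ)
    rw [← hm'] at this
    rw [show ((1:M4) + m) * A 2 * (1 + m) = (2 * (r 2 : ℂ)) • ((1:M4) + m)
        + (1 - ((r 2:ℂ)^2 + (r 0:ℂ)^2 + (r 1:ℂ)^2)) • A 2 from this,
      show ((r 2:ℂ)^2 + (r 0:ℂ)^2 + (r 1:ℂ)^2) = 1 by rw [← hsum]; ring]
    simp
  have hpap : ∀ i, (1 + m) * A i * (1 + m) = (2 * (r i : ℂ)) • (1 + m) := by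
    intro i
    fin_cases i
    · exact hpap0
    · exact hpap1
    · exact hpap2
  have hP2 : P * P = P := by
    rw [hPdef, smul_mul_assoc, mul_smul_comm, smul_smul]
    have hexp : ((1:M4) + m) * (1 + m) = (2:ℂ) • (1 + m) := by
      have e : ((1:M4) + m) * (1 + m) = 1 + m + m + m * m := by noncomm_ring
      rw [e, hm2]
      module
    rw [hexp, smul_smul]
    norm_num
  have hPH : Pᴴ = P := by
    rw [hPdef, hmdef]
    simp [Matrix.conjTranspose_smul, Matrix.conjTranspose_add, hAherm, Complex.conj_ofReal]
  -- ω(P) = 1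
  have hvm : vecState Ψ m = 1 := by
    rw [hmdef, vecState_add, vecState_add, vecState_smul, vecState_smul, vecState_smul,
      hAr 0, hAr 1, hAr 2, ← hsum]
    ring
  have hvP : star Ψ ⬝ᵥ (P *ᵥ Ψ) = 1 := by
    have : vecState Ψ P = 1 := by
      rw [hPdef, vecState_smul, vecState_add, hvone, hvm]
      norm_num
    exact this
  -- PΨ = Ψ
  have hPΨ : P *ᵥ Ψ = Ψ := by
    have hstar : star Ψ ᵥ* P = star (P *ᵥ Ψ) := by
      rw [Matrix.star_mulVec, hPH]
    have h2 : star (P *ᵥ Ψ) ⬝ᵥ Ψ = 1 := by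
      rw [← hstar, ← Matrix.dotProduct_mulVec]
      exact hvP
    have h3 : star (P *ᵥ Ψ) ⬝ᵥ (P *ᵥ Ψ) = 1 := by
      rw [← hstar, ← Matrix.dotProduct_mulVec, Matrix.mulVec_mulVec, hP2]
      exact hvP
    have hz : star (Ψ - P *ᵥ Ψ) ⬝ᵥ (Ψ - P *ᵥ Ψ) = 0 := by
      rw [star_sub, sub_dotProduct, dotProduct_sub, dotProduct_sub,
        hΨ1, hvP, h2, h3]
      ring
    have := dotProduct_star_self_eq_zero.mp hz
    exact (sub_eq_zero.mp this).symm
  have hins : star Ψ ᵥ* P = star Ψ := by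
    rw [← hPH, ← Matrix.star_mulVec, hPΨ]
  -- the scalar γ with A₀A₁A₂ = γ•1
  have hAB' : ∀ i j (t : M4), A i * (B j * t) = B j * (A i * t) := fun i j t => by
    rw [← mul_assoc, hcomm, mul_assoc]
  have h00' : ∀ t : M4, A 0 * (A 0 * t) = t := fun t => by rw [← mul_assoc, hA2 0, one_mul]
  have h11' : ∀ t : M4, A 1 * (A 1 * t) = t := fun t => by rw [← mul_assoc, hA2 1, one_mul]
  have h22' : ∀ t : M4, A 2 * (A 2 * t) = t := fun t => by rw [← mul_assoc, hA2 2, one_mul]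
  have c10' : ∀ t : M4, A 1 * (A 0 * t) = -(A 0 * (A 1 * t)) := fun t => by
    rw [← mul_assoc, c10, neg_mul, mul_assoc]
  have c20' : ∀ t : M4, A 2 * (A 0 * t) = -(A 0 * (A 2 * t)) := fun t => by
    rw [← mul_assoc, c20, neg_mul, mul_assoc]
  have c21' : ∀ t : M4, A 2 * (A 1 * t) = -(A 1 * (A 2 * t)) := fun t => by
    rw [← mul_assoc, c21, neg_mul, mul_assoc]
  set T : M4 := A 0 * A 1 * A 2 with hTdef
  clear_value T
  have hTA : ∀ i, A i * T = T * A i := by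
    intro i
    have e0 : A 0 * T = T * A 0 := by
      rw [hTdef]
      simp only [mul_assoc, c10, c20, c21, c10', c20', c21', hA2 0, hA2 1, hA2 2,
        h00', h11', h22', neg_mul, mul_neg, neg_neg, mul_one, one_mul]
    have e1 : A 1 * T = T * A 1 := by
      rw [hTdef]
      simp only [mul_assoc, c10, c20, c21, c10', c20', c21', hA2 0, hA2 1, hA2 2,
        h00', h11', h22', neg_mul, mul_neg, neg_neg, mul_one, one_mul]
    have e2 : A 2 * T = T * A 2 := by
      rw [hTdef]
      simp only [mul_assoc, c10, c20, c21, c10', c20', c21', hA2 0, hA2 1, hA2 2,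
        h00', h11', h22', neg_mul, mul_neg, neg_neg, mul_one, one_mul]
    fin_cases i
    · exact e0
    · exact e1
    · exact e2
  have hTB : ∀ j, B j * T = T * B j := by
    intro j
    rw [hTdef]
    simp only [mul_assoc, hAB', hcomm]
  have hTall : ∀ X : M4, T * X = X * T := by
    have hle : (⊤ : Subalgebra ℂ M4) ≤ Subalgebra.centralizer ℂ {T} := by
      rw [← hgen]
      apply Algebra.adjoin_le
      rintro X (⟨i, rfl⟩ | ⟨j, rfl⟩) g hg
      · rw [Set.mem_singleton_iff] at hg; rw [hg]; exact (hTA i).symm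
      · rw [Set.mem_singleton_iff] at hg; rw [hg]; exact (hTB j).symm
    intro X
    exact (Subalgebra.mem_centralizer_iff ℂ).mp (hle Algebra.mem_top) T rfl
  obtain ⟨γ, hγ⟩ : T ∈ Set.range (Matrix.scalar (Fin 4)) := by
    apply Matrix.mem_range_scalar_of_commute_single
    intro i j _
    exact (hTall _).symm
  have hT : A 0 * A 1 * A 2 = γ • (1 : M4) := by
    rw [← hTdef, ← hγ, Matrix.scalar_apply, Matrix.smul_one_eq_diagonal]
  -- products of the A's
  have h01 : A 0 * A 1 = γ • A 2 := by
    have : (A 0 * A 1 * A 2) * A 2 = (γ • (1:M4)) * A 2 := by rw [hT]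
    rwa [mul_assoc, hA2 2, mul_one, smul_mul_assoc, one_mul] at this
  have h12 : A 1 * A 2 = γ • A 0 := by
    have : A 0 * (A 0 * A 1 * A 2) = A 0 * (γ • (1:M4)) := by rw [hT]
    rwa [← mul_assoc, ← mul_assoc, hA2 0, one_mul, mul_smul_comm, mul_one] at this
  have h02 : A 0 * A 2 = (-γ) • A 1 := by
    have h : A 1 * (A 0 * (A 1 * A 2)) = γ • A 1 := by
      rw [show A 0 * (A 1 * A 2) = γ • (1:M4) by rw [← mul_assoc]; exact hT,
        mul_smul_comm, mul_one]
    have h' : -(A 0 * A 2) = γ • A 1 := by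
      rw [← h, c10', h11']
    rw [neg_smul]
    exact neg_eq_iff_eq_neg.mp h'
  have h10 : A 1 * A 0 = (-γ) • A 2 := by rw [c10, h01, neg_smul]
  have h21 : A 2 * A 1 = (-γ) • A 0 := by rw [c21, h12, neg_smul]
  have h20 : A 2 * A 0 = γ • A 1 := by rw [c20, h02, neg_smul, neg_neg]
  -- span of {1, A₀, A₁, A₂}
  set sp : Submodule ℂ M4 := Submodule.span ℂ ({1, A 0, A 1, A 2} : Set M4) with hspdef
  have hmem1 : (1 : M4) ∈ sp := Submodule.subset_span (by simp)
  have hmemA : ∀ i, A i ∈ sp := by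
    have e0 : A 0 ∈ sp := Submodule.subset_span (by simp)
    have e1 : A 1 ∈ sp := Submodule.subset_span (by simp)
    have e2 : A 2 ∈ sp := Submodule.subset_span (by simp)
    intro i
    fin_cases i
    · exact e0
    · exact e1
    · exact e2
  have hsp_mul : ∀ X ∈ sp, ∀ Y ∈ sp, X * Y ∈ sp := by
    intro X hX
    induction hX using Submodule.span_induction with
    | mem x hx =>
      intro Y hY
      induction hY using Submodule.span_induction with
      | mem y hy =>
        simp only [Set.mem_insert_iff, Set.mem_singleton_iff] at hx hy
        rcases hx with rfl | rfl | rfl | rfl <;> rcases hy with rfl | rfl | rfl | rfl <;>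
          simp only [one_mul, mul_one, hA2 0, hA2 1, hA2 2, h01, h10, h12, h21, h02, h20] <;>
          first
            | exact hmem1
            | exact hmemA _
            | exact Submodule.smul_mem _ _ (hmemA _)
      | zero => rw [mul_zero]; exact Submodule.zero_mem _
      | add y z _ _ hy hz => rw [mul_add]; exact Submodule.add_mem _ hy hz
      | smul t y _ hy => rw [mul_smul_comm]; exact Submodule.smul_mem _ _ hy
    | zero => intro Y _; rw [zero_mul]; exact Submodule.zero_mem _
    | add x y _ _ hx hy => intro Y hY; rw [add_mul]; exact Submodule.add_mem _ (hx Y hY) (hy Y hY)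
    | smul t x _ hx => intro Y hY; rw [smul_mul_assoc]; exact Submodule.smul_mem _ _ (hx Y hY)
  have hAsp : ∀ X ∈ Algebra.adjoin ℂ {Y : M4 | ∃ i, Y = A i}, X ∈ sp := by
    intro X hX
    induction hX using Algebra.adjoin_induction with
    | mem x hx => obtain ⟨i, rfl⟩ := hx; exact hmemA i
    | algebraMap t =>
      rw [Algebra.algebraMap_eq_smul_one]
      exact Submodule.smul_mem _ _ hmem1
    | add x y _ _ hx hy => exact Submodule.add_mem _ hx hy
    | mul x y _ _ hx hy => exact hsp_mul x hx y hy
  -- the key compression identity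
  have hPA : ∀ i, P * A i * P = vecState Ψ (A i) • P := by
    intro i
    rw [hAr i, hPdef, smul_mul_assoc, smul_mul_assoc, mul_smul_comm, smul_smul, hpap i,
      smul_smul, smul_smul]
    congr 1
    push_cast
    ring
  have hkey : ∀ X ∈ sp, P * X * P = vecState Ψ X • P := by
    intro X hX
    induction hX using Submodule.span_induction with
    | mem x hx =>
      simp only [Set.mem_insert_iff, Set.mem_singleton_iff] at hx
      rcases hx with rfl | rfl | rfl | rfl
      · rw [mul_one, hP2, hvone, one_smul]
      · exact hPA 0
      · exact hPA 1
      · exact hPA 2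
    | zero => rw [mul_zero, zero_mul, vecState_zero, zero_smul]
    | add x y _ _ hx hy =>
      rw [mul_add, add_mul, hx, hy, vecState_add, add_smul]
    | smul t x _ hx =>
      rw [mul_smul_comm, smul_mul_assoc, hx, vecState_smul, smul_smul]
  -- P commutes with the B-algebra
  have hPB : ∀ Y ∈ Algebra.adjoin ℂ {Y : M4 | ∃ j, Y = B j}, P * Y = Y * P := by
    have hle : Algebra.adjoin ℂ {Y : M4 | ∃ j, Y = B j} ≤ Subalgebra.centralizer ℂ {P} := by
      apply Algebra.adjoin_le
      rintro X ⟨j, rfl⟩ g hg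
      rw [Set.mem_singleton_iff] at hg
      rw [hg, hPdef, hmdef]
      simp only [smul_mul_assoc, mul_smul_comm, add_mul, mul_add, one_mul, mul_one, hcomm]
    intro Y hY
    exact hle hY P rfl
  -- conclusion
  intro X hX Y hY
  have hXsp : X ∈ sp := hAsp X hX
  have hPX : P * X * P = vecState Ψ X • P := hkey X hXsp
  have hPY : P * Y = Y * P := hPB Y hY
  calc vecState Ψ (X * Y)
      = star Ψ ⬝ᵥ ((X * Y) *ᵥ (P *ᵥ Ψ)) := by rw [hPΨ]; rfl
    _ = star Ψ ⬝ᵥ ((X * Y * P) *ᵥ Ψ) := by rw [Matrix.mulVec_mulVec]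
    _ = (star Ψ ᵥ* P) ⬝ᵥ ((X * Y * P) *ᵥ Ψ) := by rw [hins]
    _ = star Ψ ⬝ᵥ ((P * (X * Y * P)) *ᵥ Ψ) := by
        rw [← Matrix.dotProduct_mulVec, Matrix.mulVec_mulVec]
    _ = star Ψ ⬝ᵥ (((P * X * P) * Y) *ᵥ Ψ) := by
        rw [show P * (X * Y * P) = (P * X * P) * Y by
          rw [mul_assoc X Y P, ← hPY, ← mul_assoc, ← mul_assoc]]
    _ = star Ψ ⬝ᵥ (((vecState Ψ X • P) * Y) *ᵥ Ψ) := by rw [hPX]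
    _ = vecState Ψ X * (star Ψ ⬝ᵥ ((P * Y) *ᵥ Ψ)) := by
        rw [smul_mul_assoc, Matrix.smul_mulVec, dotProduct_smul, smul_eq_mul]
    _ = vecState Ψ X * ((star Ψ ᵥ* P) ⬝ᵥ (Y *ᵥ Ψ)) := by
        rw [← Matrix.mulVec_mulVec, Matrix.dotProduct_mulVec]
    _ = vecState Ψ X * vecState Ψ Y := by rw [hins]; rfl
end
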